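/- Suppose α, β ∈ Φ satisfy (w^jα, β) ∈ {0, 1, −1} for all j. Then, as an identity in k: 1 − ⟨β,α⟩_w = Σ_{j ∈ I_{α,β}(−1)} ε_w(w^jα, β), where I_{α,β}(−1) := {j ∈ {0, 1, ..., d−1} | (w^jα, β) = −1}. -/

import Mathlib

noncomputable section

/-- The subgroup `(1-w)Λ`. -/
def coinvSub {Λ : Type*} [AddCommGroup Λ] (w : AddAut Λ) : AddSubgroup Λ :=
  AddSubgroup.closure {y | ∃ x : Λ, y = x - w x}

/-- The pairing `ε_w(α,β) = ∏_{j=1}^{d-1} (1 - ζ^{-j})^{(w^jα,β)}`. -/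
def epsw {k : Type*} [Field k] {Λ : Type*} [AddCommGroup Λ] (d : ℕ) (ζ : k)
    (B : Λ →+ Λ →+ ℤ) (w : AddAut Λ) (α β : Λ) : k :=
  ∏ j ∈ Finset.Ico 1 d, (1 - ζ ^ (-(j : ℤ))) ^ (B ((j • w) α) β)

private lemma auxZpowSum {k : Type*} [Field k] {ζ : k} (hζ : ζ ≠ 0) {ι : Type*}
    (s : Finset ι) (f : ι → ℤ) : ζ ^ (∑ i ∈ s, f i) = ∏ i ∈ s, ζ ^ f i := by
  classical
  induction s using Finset.cons_induction with
  | empty => simp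
  | cons a s ha ih => rw [Finset.sum_cons, Finset.prod_cons, zpow_add₀ hζ, ih]

open Polynomial in
private lemma auxLagrange {k : Type*} [Field k] (S T : Finset ℕ) (v : ℕ → k)
    (hinj : Set.InjOn v T) (hcard : S.card = T.card) :
    ∏ s ∈ S, v s - ∏ t ∈ T, v t =
      ∑ t ∈ T, (∏ s ∈ S, (v s - v t)) * ∏ t' ∈ T.erase t, (v t' * (v t' - v t)⁻¹) := by
  rcases T.eq_empty_or_nonempty with hT | hT
  · have hS : S = ∅ := Finset.card_eq_zero.mp (by rw [hcard, hT]; simp)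
    simp [hT, hS]
  have hm : 0 < T.card := Finset.card_pos.mpr hT
  set F : k[X] := ∏ s ∈ S, (X - C (v s)) with hF
  set G : k[X] := ∏ t ∈ T, (X - C (v t)) with hG
  have hFm : F.Monic := monic_prod_of_monic _ _ fun s _ => monic_X_sub_C _
  have hGm : G.Monic := monic_prod_of_monic _ _ fun t _ => monic_X_sub_C _
  have hdegF : F.degree = (S.card : ℕ) := by
    rw [hF, degree_prod]
    simp [degree_X_sub_C]
  have hdegG : G.degree = (T.card : ℕ) := by
    rw [hG, degree_prod]
    simp [degree_X_sub_C]
  have hQdeg : (F - G).degree < (T.card : ℕ) := by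
    have := degree_sub_lt (hdegF.trans (by rw [hdegG, hcard])) hFm.ne_zero
      (by rw [hFm.leadingCoeff, hGm.leadingCoeff])
    rwa [hdegF, hcard] at this
  have hQ := Lagrange.eq_interpolate (f := F - G) hinj hQdeg
  have h0 := congrArg (Polynomial.eval 0) hQ
  rw [Lagrange.interpolate_apply] at h0
  simp only [eval_finset_sum, eval_mul, eval_C, eval_sub, eval_prod, eval_X,
    Lagrange.basis, Lagrange.basisDivisor, zero_sub] at h0
  have hGeval : ∀ t ∈ T, G.eval (v t) = 0 := fun t ht => by
    rw [hG, eval_prod]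
    exact Finset.prod_eq_zero ht (by simp)
  have hFeval : ∀ t : ℕ, F.eval (v t) = ∏ s ∈ S, (v t - v s) := fun t => by
    rw [hF, eval_prod]; simp
  have hsign : ∀ t : ℕ, (∏ s ∈ S, (v t - v s)) = (-1 : k) ^ S.card * ∏ s ∈ S, (v s - v t) := by
    intro t
    rw [← Finset.prod_const, ← Finset.prod_mul_distrib]
    exact Finset.prod_congr rfl fun s _ => by ring
  have hF0 : F.eval 0 = (-1 : k) ^ S.card * ∏ s ∈ S, v s := by
    rw [hF, eval_prod, ← Finset.prod_const, ← Finset.prod_mul_distrib]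
    exact Finset.prod_congr rfl fun s _ => by simp
  have hG0 : G.eval 0 = (-1 : k) ^ S.card * ∏ t ∈ T, v t := by
    rw [hG, eval_prod, hcard, ← Finset.prod_const, ← Finset.prod_mul_distrib]
    exact Finset.prod_congr rfl fun t _ => by simp
  have hbasis : ∀ t ∈ T, (∏ t' ∈ T.erase t, ((v t - v t')⁻¹ * -(v t'))) =
      ∏ t' ∈ T.erase t, (v t' * (v t' - v t)⁻¹) := by
    intro t _
    refine Finset.prod_congr rfl fun t' _ => ?_
    rw [← neg_sub (v t') (v t), inv_neg]
    ring
  have h2 : ∑ t ∈ T, (eval (v t) F - eval (v t) G) * ∏ t' ∈ T.erase t, ((v t - v t')⁻¹ * -v t')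
      = ∑ t ∈ T, (-1:k) ^ S.card *
        ((∏ s ∈ S, (v s - v t)) * ∏ t' ∈ T.erase t, (v t' * (v t' - v t)⁻¹)) :=
    Finset.sum_congr rfl fun t ht => by
      rw [hGeval t ht, sub_zero, hFeval, hsign, hbasis t ht, mul_assoc]
  rw [h2, ← Finset.mul_sum, hF0, hG0, ← mul_sub] at h0
  exact mul_left_cancel₀ (pow_ne_zero _ (neg_ne_zero.mpr one_ne_zero)) h0

private lemma auxOrbitSum {Λ : Type*} [AddCommGroup Λ] [Module.Free ℤ Λ]
    (d : ℕ) (hd : 0 < d) (w : AddAut Λ) (hw1 : d • w = 0)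
    (hell : Finite (Λ ⧸ coinvSub w)) (x : Λ) :
    ∑ j ∈ Finset.range d, (j • w) x = 0 := by
  classical
  set y := ∑ j ∈ Finset.range d, (j • w) x with hy
  have hfd : (d • w) x = x := by rw [hw1]; rfl
  have hfix : w y = y := by
    have h1 : w y = ∑ j ∈ Finset.range d, ((j + 1) • w) x := by
      rw [hy, map_sum]
      exact Finset.sum_congr rfl fun j _ => by rw [succ_nsmul']; rfl
    have h2 := (Finset.sum_range_succ' (fun j => (j • w) x) d).symm.trans
      (Finset.sum_range_succ (fun j => (j • w) x) d)
    rw [hfd] at h2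
    have h3 : ∑ j ∈ Finset.range d, ((j + 1) • w) x = ∑ j ∈ Finset.range d, (j • w) x := by
      have := add_right_cancel h2
      simpa using this
    rw [h1, h3, hy]
  have hfixpow : ∀ j : ℕ, (j • w) y = y := by
    intro j
    induction j with
    | zero => rfl
    | succ n ih => rw [succ_nsmul', AddAut.add_apply, ih, hfix]
  set f : Λ →+ Λ := AddMonoidHom.mk' (fun z : Λ => z - w z)
    (fun a b => by simp only [map_add]; abel) with hf
  have hco : coinvSub w = f.range := by
    have hset : {y' : Λ | ∃ x, y' = x - w x} = (f.range : Set Λ) := by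
      ext u
      simp only [Set.mem_setOf_eq, AddMonoidHom.coe_range, Set.mem_range, hf,
        AddMonoidHom.mk'_apply, eq_comm]
    rw [coinvSub, hset, AddSubgroup.closure_eq]
  set N := Nat.card (Λ ⧸ coinvSub w) with hNdef
  have hN : N ≠ 0 := Nat.card_pos.ne'
  have hNy : N • y ∈ coinvSub w := by
    have h0 : ((N • y : Λ) : Λ ⧸ coinvSub w) = 0 := by
      have : ((N • y : Λ) : Λ ⧸ coinvSub w) = N • (y : Λ ⧸ coinvSub w) := by
        simp
      rw [this, hNdef, card_nsmul_eq_zero']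
    exact (QuotientAddGroup.eq_zero_iff _).mp h0
  rw [hco] at hNy
  obtain ⟨z, hz⟩ := hNy
  have hz' : z - w z = N • y := hz
  have htele : ∑ j ∈ Finset.range d, ((j • w) z - ((j + 1) • w) z) = 0 := by
    rw [Finset.sum_range_sub' (fun j => (j • w) z) d]
    have : (d • w) z = z := by rw [hw1]; rfl
    rw [zero_nsmul, this]
    simp
  have hsum2 : ∑ j ∈ Finset.range d, (j • w) (N • y) = (d * N) • y := by
    have : ∀ j ∈ Finset.range d, (j • w) (N • y) = N • y := fun j _ => by
      rw [map_nsmul, hfixpow]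
    rw [Finset.sum_congr rfl this, Finset.sum_const, Finset.card_range, smul_smul]
  have hzero : (d * N) • y = 0 := by
    rw [← hsum2, ← hz']
    have : ∀ j ∈ Finset.range d, (j • w) (z - w z) = (j • w) z - ((j + 1) • w) z := by
      intro j _
      rw [map_sub, succ_nsmul, AddAut.add_apply]
    rw [Finset.sum_congr rfl this, htele]
  have hzint : ((d * N : ℕ) : ℤ) • y = 0 := by rw [natCast_zsmul]; exact hzero
  rcases smul_eq_zero.mp hzint with h | h
  · exact absurd (by exact_mod_cast h) (by positivity)
  · exact h

private lemma auxMod2 {d : ℕ} (hd : 0 < d) {x : ℕ} (hx : x < 2 * d) :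
    (x % d = x ∧ x < d) ∨ (x % d = x - d ∧ d ≤ x) := by
  rcases Nat.lt_or_ge x d with h | h
  · exact Or.inl ⟨Nat.mod_eq_of_lt h, h⟩
  · exact Or.inr ⟨by rw [Nat.mod_eq_sub_mod h, Nat.mod_eq_of_lt (by omega)], h⟩

private lemma auxModPow {k : Type*} [Field k] {d : ℕ} {ζ : k} (hζ0 : ζ ≠ 0)
    (hζd : ζ ^ (d : ℤ) = 1) {p q : ℤ} (h : (d : ℤ) ∣ p - q) : ζ ^ p = ζ ^ q := by
  obtain ⟨c, hc⟩ := h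
  have hp : p = q + (d : ℤ) * c := by omega
  rw [hp, zpow_add₀ hζ0, zpow_mul, hζd, one_zpow, mul_one]

private lemma auxEps {k : Type*} [Field k] (d : ℕ) (hd : 0 < d) (ζ : k)
    (hζ0 : ζ ≠ 0) (hζd : ζ ^ (d : ℤ) = 1) (a : ℕ → ℤ) (j : ℕ) (hj : j < d) :
    ∏ i ∈ Finset.Ico 1 d, (1 - ζ ^ (-(i : ℤ))) ^ (a ((i + j) % d)) =
      ∏ l ∈ (Finset.range d).erase j, ((ζ ^ l - ζ ^ j) * (ζ ^ l)⁻¹) ^ (a l) := by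
  refine Finset.prod_nbij' (fun i => (i + j) % d) (fun l => (l + d - j) % d) ?_ ?_ ?_ ?_ ?_
  · intro i hi
    rw [Finset.mem_Ico] at hi
    rw [Finset.mem_erase, Finset.mem_range]
    rcases auxMod2 hd (show i + j < 2 * d by omega) with ⟨h, h'⟩ | ⟨h, h'⟩ <;> omega
  · intro l hl
    rw [Finset.mem_erase, Finset.mem_range] at hl
    rw [Finset.mem_Ico]
    rcases auxMod2 hd (show l + d - j < 2 * d by omega) with ⟨h, h'⟩ | ⟨h, h'⟩ <;> omega
  · intro i hi
    rw [Finset.mem_Ico] at hi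
    rcases auxMod2 hd (show i + j < 2 * d by omega) with ⟨h, h'⟩ | ⟨h, h'⟩ <;>
      [skip; skip] <;>
      rcases auxMod2 hd (show (i + j) % d + d - j < 2 * d by omega) with ⟨h2, h2'⟩ | ⟨h2, h2'⟩ <;>
      omega
  · intro l hl
    rw [Finset.mem_erase, Finset.mem_range] at hl
    rcases auxMod2 hd (show l + d - j < 2 * d by omega) with ⟨h, h'⟩ | ⟨h, h'⟩ <;>
      rcases auxMod2 hd (show (l + d - j) % d + j < 2 * d by omega) with ⟨h2, h2'⟩ | ⟨h2, h2'⟩ <;>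
      omega
  · intro i hi
    rw [Finset.mem_Ico] at hi
    congr 1
    have hbase : ζ ^ (-(i : ℤ)) = ζ ^ ((j : ℤ) - ((i + j) % d : ℕ)) := by
      apply auxModPow hζ0 hζd
      rcases auxMod2 hd (show i + j < 2 * d by omega) with ⟨h, h'⟩ | ⟨h, h'⟩
      · exact ⟨0, by omega⟩
      · exact ⟨-1, by omega⟩
    have hl0 : (ζ ^ ((i + j) % d) : k) ≠ 0 := pow_ne_zero _ hζ0
    have hnat : ζ ^ ((j : ℤ) - ((i + j) % d : ℕ)) = ζ ^ j * (ζ ^ ((i + j) % d))⁻¹ := by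
      rw [zpow_sub₀ hζ0, zpow_natCast, zpow_natCast, div_eq_mul_inv]
    rw [hbase, hnat, sub_mul, mul_inv_cancel₀ hl0]

private lemma auxMain {k : Type*} [Field k] (d : ℕ) (hd : 0 < d) (ζ : k)
    (hζ : IsPrimitiveRoot ζ d) (a : ℕ → ℤ)
    (hrange : ∀ j, a j = 0 ∨ a j = 1 ∨ a j = -1)
    (hsum0 : ∑ j ∈ Finset.range d, a j = 0) :
    1 - ζ ^ (-∑ i ∈ Finset.range d, (i : ℤ) * a i) =
      ∑ j ∈ (Finset.range d).filter (fun j => a j = -1),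
        ∏ l ∈ (Finset.range d).erase j, ((ζ ^ l - ζ ^ j) * (ζ ^ l)⁻¹) ^ (a l) := by
  classical
  have hζ0 : ζ ≠ 0 := hζ.ne_zero hd.ne'
  set v : ℕ → k := fun j => ζ ^ j with hv
  set S := (Finset.range d).filter (fun j => a j = 1) with hSdef
  set T := (Finset.range d).filter (fun j => a j = -1) with hTdef
  have hv0 : ∀ l, v l ≠ 0 := fun l => pow_ne_zero _ hζ0
  have hPS : (∏ s ∈ S, v s) ≠ 0 := Finset.prod_ne_zero_iff.mpr fun s _ => hv0 s
  have hcard : S.card = T.card := by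
    have h1 : ∑ j ∈ Finset.range d, a j
        = ∑ j ∈ Finset.range d,
            ((if a j = 1 then (1 : ℤ) else 0) - (if a j = -1 then (1 : ℤ) else 0)) :=
      Finset.sum_congr rfl fun j _ => by rcases hrange j with h | h | h <;> simp [h]
    rw [h1, Finset.sum_sub_distrib, Finset.sum_boole, Finset.sum_boole] at hsum0
    have := sub_eq_zero.mp hsum0
    exact_mod_cast this
  have hsplit : ∀ (U : Finset ℕ) (g : ℕ → k),
      ∏ i ∈ U, g i ^ (a i) =
        (∏ i ∈ U.filter (fun i => a i = 1), g i) *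
          (∏ i ∈ U.filter (fun i => a i = -1), g i)⁻¹ := by
    intro U g
    rw [← Finset.prod_filter_mul_prod_filter_not U (fun i => a i = 1)]
    congr 1
    · exact Finset.prod_congr rfl fun i hi => by
        rw [(Finset.mem_filter.mp hi).2, zpow_one]
    · rw [← Finset.prod_filter_mul_prod_filter_not
        (U.filter (fun i => ¬ a i = 1)) (fun i => a i = -1), Finset.filter_filter,
        Finset.filter_filter]
      have e1 : U.filter (fun i => ¬ a i = 1 ∧ a i = -1) = U.filter (fun i => a i = -1) :=
        Finset.filter_congr fun i _ => ⟨fun h => h.2, fun h => ⟨by omega, h⟩⟩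
      have e2 : ∏ i ∈ U.filter (fun i => ¬ a i = 1 ∧ ¬ a i = -1), g i ^ a i = 1 :=
        Finset.prod_eq_one fun i hi => by
          have h2 := (Finset.mem_filter.mp hi).2
          have h0 : a i = 0 := by rcases hrange i with h | h | h <;> tauto
          rw [h0, zpow_zero]
      rw [e1, e2, mul_one, ← Finset.prod_inv_distrib]
      exact Finset.prod_congr rfl fun i hi => by
        rw [(Finset.mem_filter.mp hi).2, zpow_neg, zpow_one]
  have hzeta : ζ ^ (-∑ i ∈ Finset.range d, (i : ℤ) * a i) =
      (∏ t ∈ T, v t) * (∏ s ∈ S, v s)⁻¹ := by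
    have h1 : (-∑ i ∈ Finset.range d, (i : ℤ) * a i)
        = ∑ i ∈ Finset.range d, -((i : ℤ) * a i) := by
      rw [Finset.sum_neg_distrib]
    rw [h1, auxZpowSum hζ0]
    have h2 : ∀ i ∈ Finset.range d, ζ ^ (-((i : ℤ) * a i)) = (v i ^ a i)⁻¹ := by
      intro i _
      have hvi : v i = ζ ^ (i : ℤ) := (zpow_natCast ζ i).symm
      rw [hvi, ← zpow_neg, ← zpow_mul]
      congr 1
      ring
    rw [Finset.prod_congr rfl h2, Finset.prod_inv_distrib, hsplit (Finset.range d) v,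
      mul_inv, inv_inv, mul_comm]
  rw [hzeta]
  have heps : ∀ j ∈ T,
      ∏ l ∈ (Finset.range d).erase j, ((ζ ^ l - ζ ^ j) * (ζ ^ l)⁻¹) ^ (a l) =
        ((∏ s ∈ S, (v s - v j)) * ∏ t' ∈ T.erase j, (v t' * (v t' - v j)⁻¹)) *
          (∏ s ∈ S, v s)⁻¹ := by
    intro j hj
    have hjS : j ∉ S := by
      intro hjS
      have h1 := (Finset.mem_filter.mp hjS).2
      have h2 := (Finset.mem_filter.mp hj).2
      omega
    rw [hsplit ((Finset.range d).erase j) (fun l => (v l - v j) * (v l)⁻¹)]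
    rw [Finset.filter_erase, Finset.filter_erase, ← hSdef, ← hTdef,
      Finset.erase_eq_of_notMem hjS]
    have h3 : (∏ t' ∈ T.erase j, ((v t' - v j) * (v t')⁻¹))⁻¹
        = ∏ t' ∈ T.erase j, (v t' * (v t' - v j)⁻¹) := by
      rw [← Finset.prod_inv_distrib]
      exact Finset.prod_congr rfl fun t' _ => by rw [mul_inv, inv_inv, mul_comm]
    rw [h3, Finset.prod_mul_distrib, Finset.prod_inv_distrib]
    ring
  rw [Finset.sum_congr rfl heps, ← Finset.sum_mul]
  have hinjT : Set.InjOn v T := by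
    intro i hi j hj' h
    have hi' := Finset.mem_range.mp (Finset.mem_filter.mp hi).1
    have hj'' := Finset.mem_range.mp (Finset.mem_filter.mp hj').1
    exact hζ.pow_inj hi' hj'' h
  rw [← auxLagrange S T v hinjT hcard, sub_mul, mul_inv_cancel₀ hPS]

/-- **Proposition 4.2.** If `α, β ∈ Φ` satisfy `(w^jα, β) ∈ {0, ±1}` for all `j`, then
`1 − ⟨β,α⟩_w = ∑_{j ∈ I_{α,β}(−1)} ε_w(w^jα, β)`, where
`I_{α,β}(−1) = {j ∈ {0,…,d−1} | (w^jα, β) = −1}` and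
`⟨β,α⟩_w = ζ^{∑_{j=1}^{d-1} j·(w^jβ,α)}`. -/
theorem one_sub_pairing_eq_sum_epsw
    (k : Type*) [Field k] [CharZero k]
    (d : ℕ) (hd : 0 < d) (ζ : k) (hζ : IsPrimitiveRoot ζ d)
    (Λ : Type*) [AddCommGroup Λ] [Module.Free ℤ Λ] [Module.Finite ℤ Λ]
    (B : Λ →+ Λ →+ ℤ)
    (hBsymm : ∀ a b : Λ, B a b = B b a)
    (hBpos : ∀ a : Λ, a ≠ 0 → 0 < B a a)
    (hBgen : AddSubgroup.closure {a : Λ | B a a = 2} = ⊤)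
    (w : AddAut Λ) (hwB : ∀ a b : Λ, B (w a) (w b) = B a b)
    (hword : addOrderOf w = d)
    (hell : Finite (Λ ⧸ coinvSub w)) :
    ∀ α β : Λ, B α α = 2 → B β β = 2 →
      (∀ j : ℕ, B ((j • w) α) β = 0 ∨ B ((j • w) α) β = 1 ∨ B ((j • w) α) β = -1) →
      1 - ζ ^ (∑ j ∈ Finset.Ico 1 d, (j : ℤ) * B ((j • w) β) α) =
        ∑ j ∈ (Finset.range d).filter (fun j => B ((j • w) α) β = -1),
          epsw d ζ B w ((j • w) α) β := by
  intro α β hα hβ hj3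
  classical
  have hζ0 : ζ ≠ 0 := hζ.ne_zero hd.ne'
  have hζd : ζ ^ (d : ℤ) = 1 := by rw [zpow_natCast]; exact hζ.pow_eq_one
  have hw1 : d • w = 0 := by rw [← hword]; exact addOrderOf_nsmul_eq_zero w
  have hwBn : ∀ (n : ℕ) (x y : Λ), B ((n • w) x) ((n • w) y) = B x y := by
    intro n
    induction n with
    | zero => intro x y; rfl
    | succ m ih =>
        intro x y
        rw [succ_nsmul, AddAut.add_apply, AddAut.add_apply, ih, hwB]
  have hmodw : ∀ j : ℕ, ((j % d) • w) = j • w := by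
    intro j; rw [← hword]; exact mod_addOrderOf_nsmul w j
  have horb : ∑ j ∈ Finset.range d, B ((j • w) α) β = 0 := by
    have h0 : ∑ j ∈ Finset.range d, (j • w) α = 0 := auxOrbitSum d hd w hw1 hell α
    have h1 : B (∑ j ∈ Finset.range d, (j • w) α) β
        = ∑ j ∈ Finset.range d, B ((j • w) α) β := by
      rw [map_sum, AddMonoidHom.finset_sum_apply]
    rw [← h1, h0]
    simp
  have hmain := auxMain d hd ζ hζ (fun j => B ((j • w) α) β) hj3 horb
  -- translate the LHS exponent
  have hba : ∀ j ∈ Finset.Ico 1 d, B ((j • w) β) α = B (((d - j) • w) α) β := by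
    intro j hj
    rw [Finset.mem_Ico] at hj
    have h1 : ((d - j) • w) ((j • w) β) = β := by
      rw [← AddAut.add_apply, ← add_nsmul]
      have hdj : d - j + j = d := by omega
      rw [hdj, hw1]
      rfl
    calc B ((j • w) β) α = B (((d - j) • w) ((j • w) β)) (((d - j) • w) α) :=
          (hwBn (d - j) _ _).symm
      _ = B β (((d - j) • w) α) := by rw [h1]
      _ = B (((d - j) • w) α) β := hBsymm _ _
  have hexp : ζ ^ (∑ j ∈ Finset.Ico 1 d, (j : ℤ) * B ((j • w) β) α)
      = ζ ^ (-∑ i ∈ Finset.range d, (i : ℤ) * B ((i • w) α) β) := by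
    have e1 : ∑ j ∈ Finset.Ico 1 d, (j : ℤ) * B ((j • w) β) α
        = ∑ i ∈ Finset.Ico 1 d, ((d - i : ℕ) : ℤ) * B ((i • w) α) β := by
      rw [Finset.sum_congr rfl fun j hj => by rw [hba j hj]]
      refine Finset.sum_nbij' (fun j => d - j) (fun i => d - i) ?_ ?_ ?_ ?_ ?_
      · intro j hj; rw [Finset.mem_Ico] at hj; rw [Finset.mem_Ico]; omega
      · intro i hi; rw [Finset.mem_Ico] at hi; rw [Finset.mem_Ico]; omega
      · intro j hj; rw [Finset.mem_Ico] at hj; omega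
      · intro i hi; rw [Finset.mem_Ico] at hi; omega
      · intro j hj
        rw [Finset.mem_Ico] at hj
        rw [show d - (d - j) = j by omega]
    rw [e1]
    apply auxModPow hζ0 hζd
    refine ⟨∑ i ∈ Finset.Ico 1 d, B ((i • w) α) β, ?_⟩
    rw [Finset.range_eq_Ico, Finset.sum_eq_sum_Ico_succ_bot hd]
    simp only [Nat.cast_zero, zero_mul, zero_add]
    rw [sub_neg_eq_add, ← Finset.sum_add_distrib, Finset.mul_sum]
    refine Finset.sum_congr rfl fun i hi => ?_
    rw [Finset.mem_Ico] at hi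
    have hcast : ((d - i : ℕ) : ℤ) = (d : ℤ) - i := by omega
    rw [hcast]
    ring
  -- translate each epsilon factor
  have hepsw : ∀ j ∈ (Finset.range d).filter (fun j => B ((j • w) α) β = -1),
      epsw d ζ B w ((j • w) α) β =
        ∏ l ∈ (Finset.range d).erase j,
          ((ζ ^ l - ζ ^ j) * (ζ ^ l)⁻¹) ^ (B ((l • w) α) β) := by
    intro j hjmem
    have hjd : j < d := Finset.mem_range.mp (Finset.mem_filter.mp hjmem).1
    rw [epsw]
    have hterm : ∀ i ∈ Finset.Ico 1 d,
        (1 - ζ ^ (-(i : ℤ))) ^ (B ((i • w) ((j • w) α)) β)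
          = (1 - ζ ^ (-(i : ℤ))) ^ (B ((((i + j) % d) • w) α) β) := by
      intro i _
      congr 2
      rw [hmodw (i + j), add_nsmul, AddAut.add_apply]
    rw [Finset.prod_congr rfl hterm]
    exact auxEps d hd ζ hζ0 hζd (fun l => B ((l • w) α) β) j hjd
  rw [hexp, Finset.sum_congr rfl hepsw]
  exact hmain

end
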